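/- Let C1, C2 : [0,1]² → ℝ be continuously differentiable functions such that at every point (k1,k2) ∈ [0,1)×[0,1): ∂C1/∂k1 > 0, ∂C2/∂k2 > 0, ∂C1/∂k2 < 0, ∂C2/∂k1 < 0, and (∂C1/∂k2)(∂C2/∂k1) > (∂C1/∂k1)(∂C2/∂k2). Then for every interior-boundary point (k1,k2) with k1 < 1 and k2 < 1 there exists a direction vector (1,θ) with θ > 0 such that the directional derivatives of both C1 and C2 at (k1,k2) along (1,θ) are strictly negative. Consequently, no point (k1,k2) with k1 < 1 and k2 < 1 is Pareto-optimal for minimizing (C1,C2). -/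

import Mathlib

/-- Pareto optimality for minimizing (C1, C2) over [0,1]². -/
def ParetoOpt (C1 C2 : ℝ × ℝ → ℝ) (p : ℝ × ℝ) : Prop :=
  p ∈ Set.Icc (0 : ℝ) 1 ×ˢ Set.Icc (0 : ℝ) 1 ∧
  ¬ ∃ q ∈ Set.Icc (0 : ℝ) 1 ×ˢ Set.Icc (0 : ℝ) 1,
      C1 q ≤ C1 p ∧ C2 q ≤ C2 p ∧ (C1 q < C1 p ∨ C2 q < C2 p)

open Filter Topology

lemma descent (C : ℝ × ℝ → ℝ) (hC : ContDiff ℝ 1 C) (p v : ℝ × ℝ)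
    (h : fderiv ℝ C p v < 0) :
    ∀ᶠ t in 𝓝[>] (0:ℝ), C (p + t • v) < C p := by
  have hdf : HasFDerivAt C (fderiv ℝ C p) p :=
    (hC.differentiable one_ne_zero).differentiableAt.hasFDerivAt
  have hline : HasDerivAt (fun t : ℝ => p + t • v) v 0 := by
    simpa using ((hasDerivAt_id (0:ℝ)).smul_const v).const_add p
  have hdf' : HasFDerivAt C (fderiv ℝ C p) ((fun t : ℝ => p + t • v) 0) := by
    simpa using hdf
  have hg : HasDerivAt (fun t : ℝ => C (p + t • v)) (fderiv ℝ C p v) 0 := by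
    exact hdf'.comp_hasDerivAt 0 hline
  have hslope := hasDerivAt_iff_tendsto_slope.1 hg
  have hev : ∀ᶠ t in 𝓝[≠] (0:ℝ),
      slope (fun t : ℝ => C (p + t • v)) 0 t < 0 :=
    hslope.eventually (eventually_lt_nhds h)
  have hsub : 𝓝[>] (0:ℝ) ≤ 𝓝[≠] (0:ℝ) :=
    nhdsWithin_mono 0 (fun x hx => ne_of_gt hx)
  filter_upwards [hev.filter_mono hsub, self_mem_nhdsWithin] with t ht htpos
  have htpos' : (0:ℝ) < t := htpos
  rw [slope_def_field] at ht
  have : (C (p + t • v) - C (p + (0:ℝ) • v)) / (t - 0) < 0 := by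
    simpa [slope] using ht
  have hnum : C (p + t • v) - C (p + (0:ℝ) • v) < 0 := by
    by_contra hcon
    push_neg at hcon
    have := div_nonneg hcon (by linarith : (0:ℝ) ≤ t - 0)
    linarith
  simpa using hnum

theorem stmt_10 (C1 C2 : ℝ × ℝ → ℝ)
    (hC1 : ContDiff ℝ 1 C1) (hC2 : ContDiff ℝ 1 C2)
    (hyp : ∀ p : ℝ × ℝ, p ∈ Set.Ico (0 : ℝ) 1 ×ˢ Set.Ico (0 : ℝ) 1 →
      0 < fderiv ℝ C1 p (1, 0) ∧ 0 < fderiv ℝ C2 p (0, 1) ∧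
      fderiv ℝ C1 p (0, 1) < 0 ∧ fderiv ℝ C2 p (1, 0) < 0 ∧
      fderiv ℝ C1 p (1, 0) * fderiv ℝ C2 p (0, 1) <
        fderiv ℝ C1 p (0, 1) * fderiv ℝ C2 p (1, 0)) :
    ∀ p : ℝ × ℝ, p ∈ Set.Ico (0 : ℝ) 1 ×ˢ Set.Ico (0 : ℝ) 1 →
      (∃ θ : ℝ, 0 < θ ∧ fderiv ℝ C1 p (1, θ) < 0 ∧ fderiv ℝ C2 p (1, θ) < 0) ∧
      ¬ ParetoOpt C1 C2 p := by
  intro p hp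
  obtain ⟨hA1, hB2, hB1, hA2, hcross⟩ := hyp p hp
  set A1 := fderiv ℝ C1 p (1, 0) with hA1def
  set B1 := fderiv ℝ C1 p (0, 1) with hB1def
  set A2 := fderiv ℝ C2 p (1, 0) with hA2def
  set B2 := fderiv ℝ C2 p (0, 1) with hB2def
  have hB1' : (0:ℝ) < -B1 := by linarith
  have hlt : A1 / (-B1) < (-A2) / B2 := by
    rw [div_lt_div_iff₀ hB1' hB2]
    nlinarith
  set θ := (A1 / (-B1) + (-A2) / B2) / 2 with hθdef
  have hθ1 : A1 / (-B1) < θ := by rw [hθdef]; linarith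
  have hθ2 : θ < (-A2) / B2 := by rw [hθdef]; linarith
  have hθpos : 0 < θ := lt_of_le_of_lt (le_of_lt (div_pos hA1 hB1')) hθ1
  have hv : ((1:ℝ), θ) = ((1:ℝ), (0:ℝ)) + θ • ((0:ℝ), (1:ℝ)) := by
    simp [Prod.ext_iff]
  have hd1 : fderiv ℝ C1 p (1, θ) = A1 + θ * B1 := by
    rw [hv, map_add, map_smul]; simp [hA1def, hB1def, smul_eq_mul]
  have hd2 : fderiv ℝ C2 p (1, θ) = A2 + θ * B2 := by
    rw [hv, map_add, map_smul]; simp [hA2def, hB2def, smul_eq_mul]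
  have h1 : fderiv ℝ C1 p (1, θ) < 0 := by
    rw [hd1]
    rw [div_lt_iff₀ hB1'] at hθ1
    nlinarith
  have h2 : fderiv ℝ C2 p (1, θ) < 0 := by
    rw [hd2]
    rw [lt_div_iff₀ hB2] at hθ2
    nlinarith
  refine ⟨⟨θ, hθpos, h1, h2⟩, ?_⟩
  rintro ⟨-, hno⟩
  apply hno
  -- find small t > 0 giving a strictly better point
  have hdec1 := descent C1 hC1 p (1, θ) h1
  have hdec2 := descent C2 hC2 p (1, θ) h2
  obtain ⟨⟨hp1a, hp1b⟩, ⟨hp2a, hp2b⟩⟩ := hp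
  set ε := min (1 - p.1) ((1 - p.2) / θ) with hεdef
  have hεpos : 0 < ε := lt_min (by linarith) (div_pos (by linarith) hθpos)
  have hIoo : Set.Ioo (0:ℝ) ε ∈ 𝓝[>] (0:ℝ) :=
    Ioo_mem_nhdsGT hεpos
  obtain ⟨t, ⟨ht1, ht2⟩, htpos, htε⟩ := ((hdec1.and hdec2).and (eventually_of_mem hIoo
    (fun x hx => hx))).exists
  refine ⟨p + t • ((1:ℝ), θ), ?_, le_of_lt ht1, le_of_lt ht2, Or.inl ht1⟩
  constructor
  · constructor
    · simp only [Prod.fst_add, Prod.smul_fst, smul_eq_mul, mul_one]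
      linarith
    · simp only [Prod.fst_add, Prod.smul_fst, smul_eq_mul, mul_one]
      have : t < 1 - p.1 := lt_of_lt_of_le htε (min_le_left _ _)
      linarith
  · constructor
    · simp only [Prod.snd_add, Prod.smul_snd, smul_eq_mul]
      nlinarith
    · simp only [Prod.snd_add, Prod.smul_snd, smul_eq_mul]
      have h3 : t < (1 - p.2) / θ := lt_of_lt_of_le htε (min_le_right _ _)
      rw [lt_div_iff₀ hθpos] at h3
      linarith
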